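/- Let X be an n×p real matrix, y ∈ ℝⁿ, λ > 0, and define J_λ(β, γ) = ‖Xβ − y‖² + λ‖β − γ‖². Let N be any norm on ℝᵖ, η_γ > 0, and D_γ = {γ ∈ ℝᵖ : N(γ) ≤ η_γ}. Let γ ∈ ℝᵖ with N(γ) ≥ η_γ, let S ⊆ {1, …, p} and α ∈ (0, 1) be such that the vector φ*(γ, S, α), defined by φ*(γ,S,α)ⱼ = γⱼ for j ∈ S and α·γⱼ for j ∉ S, satisfies N(φ*(γ, S, α)) ≤ η_γ, and let β₀ ∈ ℝᵖ minimize β ↦ J_λ(β, γ). Then: inf over β ∈ ℝᵖ of sup over γ' ∈ D_γ of J_λ(β, γ') ≥ α·J_λ(β₀, γ) − λα(1 − α)·‖γ_{Sᶜ}‖². -/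

import Mathlib

open scoped BigOperators

/-- Type copy of `Fin p → ℝ` to carry an alternative norm. -/
def NCopy (p : ℕ) : Type := Fin p → ℝ

instance (p : ℕ) : AddCommGroup (NCopy p) := inferInstanceAs (AddCommGroup (Fin p → ℝ))
noncomputable instance (p : ℕ) : Module ℝ (NCopy p) := inferInstanceAs (Module ℝ (Fin p → ℝ))
instance (p : ℕ) : FiniteDimensional ℝ (NCopy p) :=
  inferInstanceAs (FiniteDimensional ℝ (Fin p → ℝ))

/-- Any norm on `Fin p → ℝ` dominates the sup norm up to a constant. -/
theorem norm_dominates {p : ℕ} (N : (Fin p → ℝ) → ℝ)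
    (hN_eq_zero : ∀ x, N x = 0 ↔ x = 0)
    (hN_smul : ∀ (c : ℝ) (x : Fin p → ℝ), N (c • x) = |c| * N x)
    (hN_add : ∀ x z : Fin p → ℝ, N (x + z) ≤ N x + N z) :
    ∃ C > 0, ∀ x : Fin p → ℝ, ‖x‖ ≤ C * N x := by
  letI : NormedAddCommGroup (NCopy p) :=
    AddGroupNorm.toNormedAddCommGroup
      { toFun := N
        map_zero' := (hN_eq_zero 0).mpr rfl
        neg' := fun x => by
          have := hN_smul (-1) (show Fin p → ℝ from x)
          rw [neg_one_smul ℝ, abs_neg, abs_one, one_mul] at this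
          exact this
        add_le' := hN_add
        eq_zero_of_map_eq_zero' := fun x hx => (hN_eq_zero x).mp hx }
  letI : NormedSpace ℝ (NCopy p) :=
    { norm_smul_le := fun c x => (hN_smul c x).le }
  let f : NCopy p →ₗ[ℝ] (Fin p → ℝ) :=
    { toFun := fun x => x
      map_add' := fun _ _ => rfl
      map_smul' := fun _ _ => rfl }
  let g : NCopy p →L[ℝ] (Fin p → ℝ) := LinearMap.toContinuousLinearMap f
  refine ⟨‖g‖ + 1, by positivity, fun x => ?_⟩
  let xc : NCopy p := x
  have h1 : ‖g xc‖ ≤ ‖g‖ * ‖xc‖ := g.le_opNorm xc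
  have h2 : ‖xc‖ = N x := rfl
  have hNx : 0 ≤ N x := by
    rw [← h2]; exact norm_nonneg _
  have h3 : ‖g‖ * N x ≤ (‖g‖ + 1) * N x := by nlinarith
  have h4 : ‖x‖ = ‖g xc‖ := rfl
  rw [h4]
  calc ‖g xc‖ ≤ ‖g‖ * N x := by rw [← h2]; exact h1
    _ ≤ (‖g‖ + 1) * N x := h3

/-- The objective `J_λ(β, γ) = ‖Xβ − y‖² + λ‖β − γ‖²`. -/
noncomputable def Jobj (n p : ℕ) (X : Matrix (Fin n) (Fin p) ℝ) (y : Fin n → ℝ)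
    (lam : ℝ) (β γ : Fin p → ℝ) : ℝ :=
  (∑ i, (X.mulVec β i - y i) ^ 2) + lam * ∑ j, (β j - γ j) ^ 2

/-- For any norm `N`, `η_γ > 0`, `γ` with `N(γ) ≥ η_γ`, and
`S, α ∈ (0,1)` such that `φ*(γ,S,α)` (keeping `γ` on `S`, shrinking by `α`
off `S`) satisfies `N(φ*(γ,S,α)) ≤ η_γ`, and `β₀` minimizing `β ↦ J_λ(β, γ)`:
`inf_β sup_{γ' ∈ D_γ} J_λ(β, γ') ≥ α J_λ(β₀, γ) − λα(1 − α)‖γ_{Sᶜ}‖²`. -/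
theorem optimality_gap_bound_partial_shrinkage (n p : ℕ)
    (X : Matrix (Fin n) (Fin p) ℝ) (y : Fin n → ℝ) (lam : ℝ) (hlam : 0 < lam)
    (N : (Fin p → ℝ) → ℝ)
    (hN_nonneg : ∀ x, 0 ≤ N x)
    (hN_eq_zero : ∀ x, N x = 0 ↔ x = 0)
    (hN_smul : ∀ (c : ℝ) (x : Fin p → ℝ), N (c • x) = |c| * N x)
    (hN_add : ∀ x z : Fin p → ℝ, N (x + z) ≤ N x + N z)
    (ηγ : ℝ) (hηγ : 0 < ηγ)
    (γ : Fin p → ℝ) (hγ : ηγ ≤ N γ)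
    (S : Finset (Fin p)) (α : ℝ) (hα : α ∈ Set.Ioo (0 : ℝ) 1)
    (hφ : N (fun j => if j ∈ S then γ j else α * γ j) ≤ ηγ)
    (β₀ : Fin p → ℝ) (hβ₀ : ∀ β, Jobj n p X y lam β₀ γ ≤ Jobj n p X y lam β γ) :
    (⨅ β : Fin p → ℝ,
        sSup {r : ℝ | ∃ γ' : Fin p → ℝ, N γ' ≤ ηγ ∧ r = Jobj n p X y lam β γ'}) ≥
      α * Jobj n p X y lam β₀ γ - lam * α * (1 - α) * (∑ j ∈ Sᶜ, γ j ^ 2) := by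
  obtain ⟨hα0, hα1⟩ := hα
  obtain ⟨C, hC, hCb⟩ := norm_dominates N hN_eq_zero hN_smul hN_add
  set φ : Fin p → ℝ := fun j => if j ∈ S then γ j else α * γ j with hφdef
  -- Key pointwise inequality
  have key : ∀ β : Fin p → ℝ,
      α * Jobj n p X y lam β₀ γ - lam * α * (1 - α) * (∑ j ∈ Sᶜ, γ j ^ 2)
        ≤ Jobj n p X y lam β φ := by
    intro β
    have hstep : α * Jobj n p X y lam β γ - lam * α * (1 - α) * (∑ j ∈ Sᶜ, γ j ^ 2)
        ≤ Jobj n p X y lam β φ := by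
      unfold Jobj
      have hP : (0:ℝ) ≤ ∑ i, (X.mulVec β i - y i) ^ 2 :=
        Finset.sum_nonneg fun i _ => sq_nonneg _
      have hsplitφ : ∑ j, (β j - φ j) ^ 2
          = ∑ j ∈ S, (β j - γ j) ^ 2 + ∑ j ∈ Sᶜ, (β j - α * γ j) ^ 2 := by
        rw [← Finset.sum_add_sum_compl S]
        congr 1
        · exact Finset.sum_congr rfl fun j hj => by simp [hφdef, hj]
        · exact Finset.sum_congr rfl fun j hj => by
            simp [hφdef, Finset.mem_compl.mp hj]
      have hsplitγ : ∑ j, (β j - γ j) ^ 2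
          = ∑ j ∈ S, (β j - γ j) ^ 2 + ∑ j ∈ Sᶜ, (β j - γ j) ^ 2 :=
        (Finset.sum_add_sum_compl S _).symm
      have hS : α * ∑ j ∈ S, (β j - γ j) ^ 2 ≤ ∑ j ∈ S, (β j - γ j) ^ 2 := by
        have : (0:ℝ) ≤ ∑ j ∈ S, (β j - γ j) ^ 2 :=
          Finset.sum_nonneg fun j _ => sq_nonneg _
        nlinarith
      have hSc : ∑ j ∈ Sᶜ, (α * (β j - γ j) ^ 2 - α * (1 - α) * γ j ^ 2)
          ≤ ∑ j ∈ Sᶜ, (β j - α * γ j) ^ 2 := by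
        refine Finset.sum_le_sum fun j _ => ?_
        nlinarith [mul_nonneg (by linarith : (0:ℝ) ≤ 1 - α) (sq_nonneg (β j))]
      rw [Finset.sum_sub_distrib, ← Finset.mul_sum, ← Finset.mul_sum] at hSc
      have hQ : α * (∑ j, (β j - γ j) ^ 2) - α * (1 - α) * ∑ j ∈ Sᶜ, γ j ^ 2
          ≤ ∑ j, (β j - φ j) ^ 2 := by
        rw [hsplitφ, hsplitγ]; linarith
      nlinarith [mul_le_mul_of_nonneg_left hQ hlam.le]
    have := hβ₀ β
    nlinarith [this]
  refine le_ciInf fun β => ?_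
  have hmem : Jobj n p X y lam β φ ∈
      {r : ℝ | ∃ γ' : Fin p → ℝ, N γ' ≤ ηγ ∧ r = Jobj n p X y lam β γ'} :=
    ⟨φ, hφ, rfl⟩
  have hbdd : BddAbove {r : ℝ | ∃ γ' : Fin p → ℝ, N γ' ≤ ηγ ∧ r = Jobj n p X y lam β γ'} := by
    refine ⟨(∑ i, (X.mulVec β i - y i) ^ 2) + lam * ∑ _j : Fin p, (‖β‖ + C * ηγ) ^ 2, ?_⟩
    rintro r ⟨γ', hγ', rfl⟩
    unfold Jobj
    have hterm : ∀ j, (β j - γ' j) ^ 2 ≤ (‖β‖ + C * ηγ) ^ 2 := by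
      intro j
      have h1 : |β j - γ' j| ≤ ‖β - γ'‖ := by
        have := norm_le_pi_norm (β - γ') j
        simpa using this
      have h2 : ‖β - γ'‖ ≤ ‖β‖ + ‖γ'‖ := norm_sub_le _ _
      have h3 : ‖γ'‖ ≤ C * ηγ := by
        calc ‖γ'‖ ≤ C * N γ' := hCb γ'
          _ ≤ C * ηγ := by nlinarith
      have habs : |β j - γ' j| ≤ ‖β‖ + C * ηγ := by linarith
      calc (β j - γ' j) ^ 2 = |β j - γ' j| ^ 2 := (sq_abs _).symm
        _ ≤ (‖β‖ + C * ηγ) ^ 2 := by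
            have h0 : (0:ℝ) ≤ |β j - γ' j| := abs_nonneg _
            nlinarith
    have := Finset.sum_le_sum (fun j (_ : j ∈ Finset.univ) => hterm j)
    nlinarith [mul_le_mul_of_nonneg_left this hlam.le]
  exact (key β).trans (le_csSup hbdd hmem)
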